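/- arXiv:2004.10984 — 4 statements merged into one kernel-verified Lean document; each statement's English description precedes it below -/
import Mathlib

section
/- Let (P_n) be a sequence of polytopes in R^k with P_{n+1} ⊆ P_n for all n, let P = ∩_n P_n, and let p be an extreme point of P. Then there exists for each n a vertex p_n of P_n such that the sequence (p_n) converges to p. -/
open Filter Topology

lemma pad_sum {M : Type*} [AddCommMonoid M] {m K : ℕ} (h : m ≤ K) (g : Fin m → M) :
    ∑ j : Fin K, (if hj : (j : ℕ) < m then g ⟨j, hj⟩ else 0) = ∑ i : Fin m, g i := by
  classical
  rw [← Finset.sum_subset (Finset.subset_univ (Finset.univ.map (Fin.castLEEmb h)))]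
  · rw [Finset.sum_map]
    refine Finset.sum_congr rfl fun i _ => ?_
    have hi : ((Fin.castLEEmb h i : Fin K) : ℕ) < m := by simp [i.isLt]
    rw [dif_pos hi]
    exact congrArg g (Fin.ext rfl)
  · intro x _ hx
    rw [dif_neg]
    intro hlt
    exact hx (by simp [Finset.mem_map, Fin.castLEEmb]; exact ⟨⟨x, hlt⟩, Fin.ext rfl⟩)

/-- Carathéodory with a fixed index type `Fin (k+1)`. -/
lemma carath_pad (k : ℕ) (s : Set (Fin k → ℝ)) (p : Fin k → ℝ)
    (hps : p ∈ convexHull ℝ s) :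
    ∃ (w : Fin (k + 1) → ℝ) (z : Fin (k + 1) → (Fin k → ℝ)),
      (∀ i, 0 ≤ w i) ∧ ∑ i, w i = 1 ∧ (∀ i, z i ∈ s) ∧ ∑ i, w i • z i = p := by
  obtain ⟨ι, hι, z, w, hzs, hai, hw0, hw1, hsum⟩ :=
    eq_pos_convex_span_of_mem_convexHull hps
  letI := hι
  let m := Fintype.card ι
  let e : ι ≃ Fin m := Fintype.equivFin ι
  have hw1' : ∑ j : Fin m, w (e.symm j) = 1 := by
    rw [← hw1]
    exact Fintype.sum_bijective e.symm e.symm.bijective _ _ fun j => rfl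
  have hsum' : ∑ j : Fin m, w (e.symm j) • z (e.symm j) = p := by
    rw [← hsum]
    exact Fintype.sum_bijective e.symm e.symm.bijective _ _ fun j => rfl
  have hne : Nonempty ι := by
    by_contra h
    rw [not_nonempty_iff] at h
    simp at hw1
  have hmpos : 0 < m := Fintype.card_pos
  have hcard : m ≤ k + 1 := by
    refine hai.card_le_finrank_succ.trans ?_
    have h1 : Module.finrank ℝ (vectorSpan ℝ (Set.range z)) ≤
        Module.finrank ℝ (Fin k → ℝ) := Submodule.finrank_le _
    simpa using Nat.add_le_add_right (h1.trans (by simp)) 1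
  classical
  refine ⟨fun j => if h : (j : ℕ) < m then w (e.symm ⟨j, h⟩) else 0,
    fun j => if h : (j : ℕ) < m then z (e.symm ⟨j, h⟩) else z (e.symm ⟨0, hmpos⟩),
    ?_, ?_, ?_, ?_⟩
  · intro j
    by_cases h : (j : ℕ) < m <;> simp [h, (hw0 _).le]
  · rw [← hw1']
    exact pad_sum hcard (fun i => w (e.symm i))
  · intro j
    by_cases h : (j : ℕ) < m <;>
      simp only [h, dif_pos, dif_neg, not_false_iff] <;> exact hzs ⟨_, rfl⟩
  · rw [← hsum']
    rw [show (fun j : Fin (k+1) => (if h : (j : ℕ) < m then w (e.symm ⟨j, h⟩) else 0) •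
        (if h : (j : ℕ) < m then z (e.symm ⟨j, h⟩) else z (e.symm ⟨0, hmpos⟩))) =
        (fun j : Fin (k+1) => if h : (j : ℕ) < m then
          w (e.symm ⟨j, h⟩) • z (e.symm ⟨j, h⟩) else 0) from
      funext fun j => by by_cases h : (j : ℕ) < m <;> simp [h]]
    exact pad_sum hcard (fun i => w (e.symm i) • z (e.symm i))

/-- For a nested sequence of polytopes `P n = convexHull (V n)` in `ℝ^k`,
every extreme point `p` of the intersection `⋂ n, P n` is the limit of a sequence of
vertices (extreme points) `q n` of the polytopes `P n`. -/
theorem stmt0 (k : ℕ) (V : ℕ → Finset (Fin k → ℝ)) (P : ℕ → Set (Fin k → ℝ))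
    (hP : ∀ n, P n = convexHull ℝ (V n : Set (Fin k → ℝ)))
    (hnest : ∀ n, P (n + 1) ⊆ P n)
    (p : Fin k → ℝ) (hp : p ∈ Set.extremePoints ℝ (⋂ n, P n)) :
    ∃ q : ℕ → Fin k → ℝ,
      (∀ n, q n ∈ Set.extremePoints ℝ (P n)) ∧ Tendsto q atTop (𝓝 p) := by
  classical
  have hPc : ∀ n, IsCompact (P n) := fun n =>
    (hP n) ▸ (V n).finite_toSet.isCompact_convexHull ℝ
  have hPcl : ∀ n, IsClosed (P n) := fun n =>
    (hP n) ▸ (V n).finite_toSet.isClosed_convexHull ℝ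
  have hPconv : ∀ n, Convex ℝ (P n) := fun n => (hP n) ▸ convex_convexHull ℝ _
  have hE : ∀ n, Set.extremePoints ℝ (P n) ⊆ (V n : Set (Fin k → ℝ)) := fun n => by
    rw [hP n]; exact extremePoints_convexHull_subset
  have hEhull : ∀ n, P n = convexHull ℝ (Set.extremePoints ℝ (P n)) := fun n => by
    have h1 := closure_convexHull_extremePoints (hPc n) (hPconv n)
    have h2 : IsClosed (convexHull ℝ (Set.extremePoints ℝ (P n))) :=
      (((V n).finite_toSet.subset (hE n))).isClosed_convexHull ℝ
    rw [← h2.closure_eq, h1]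
  have hmono : ∀ m n, m ≤ n → P n ⊆ P m := by
    intro m n h
    induction n with
    | zero => rw [Nat.le_zero.mp h]
    | succ n ih =>
      rcases Nat.lt_or_ge m (n+1) with h' | h'
      · exact (hnest n).trans (ih (Nat.lt_succ_iff.mp h'))
      · rw [Nat.le_antisymm h h']
  have hpP : ∀ n, p ∈ P n := fun n => Set.mem_iInter.mp hp.1 n
  have hEne : ∀ n, (Set.extremePoints ℝ (P n)).Nonempty := fun n =>
    (hPc n).extremePoints_nonempty ⟨p, hpP n⟩
  -- main claim
  have claim : ∀ ε > 0, ∀ᶠ n in atTop,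
      ∃ x ∈ Set.extremePoints ℝ (P n), dist x p < ε := by
    intro ε hε
    by_contra hcon
    rw [Filter.not_eventually] at hcon
    have hcon' : ∃ᶠ n in atTop, ∀ x ∈ Set.extremePoints ℝ (P n), ε ≤ dist x p := by
      refine hcon.mono fun n hn x hx => ?_
      by_contra h
      exact hn ⟨x, hx, not_le.mp h⟩
    obtain ⟨φ, hφ, hfar⟩ := Filter.extraction_of_frequently_atTop hcon'
    have hrep : ∀ n, p ∈ convexHull ℝ (Set.extremePoints ℝ (P (φ n))) := fun n =>
      (hEhull (φ n)) ▸ hpP (φ n)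
    choose w z hw0 hw1 hz hsum using fun n => carath_pad k _ p (hrep n)
    -- compactness
    set K : Set ((Fin (k+1) → ℝ) × (Fin (k+1) → Fin k → ℝ)) :=
      (stdSimplex ℝ (Fin (k+1))) ×ˢ (Set.univ.pi fun _ : Fin (k+1) => P 0) with hK
    have hKc : IsCompact K := (isCompact_stdSimplex ℝ _).prod
      (isCompact_univ_pi fun _ => hPc 0)
    have hmem : ∀ n, (w n, z n) ∈ K := by
      intro n
      refine ⟨⟨hw0 n, hw1 n⟩, fun i _ => ?_⟩
      exact hmono 0 (φ n) (Nat.zero_le _) (extremePoints_subset (hz n i))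
    obtain ⟨⟨W, Z⟩, hWZ, ψ, hψ, htend⟩ := hKc.tendsto_subseq hmem
    have hWt : Tendsto (fun n => w (ψ n)) atTop (𝓝 W) :=
      (continuous_fst.tendsto _).comp htend
    have hZt : ∀ i, Tendsto (fun n => z (ψ n) i) atTop (𝓝 (Z i)) := fun i =>
      (((continuous_apply i).comp continuous_snd).tendsto _).comp htend
    have hZP : ∀ i, Z i ∈ ⋂ n, P n := by
      intro i
      rw [Set.mem_iInter]
      intro m
      refine (hPcl m).mem_of_tendsto (hZt i) ?_
      filter_upwards [Filter.eventually_ge_atTop m] with n hn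
      exact hmono m (φ (ψ n)) (hn.trans ((hψ.le_apply).trans hφ.le_apply))
        (extremePoints_subset (hz (ψ n) i))
    have hZfar : ∀ i, ε ≤ dist (Z i) p := by
      intro i
      refine ge_of_tendsto ((hZt i).dist tendsto_const_nhds) ?_
      exact Filter.Eventually.of_forall fun n => hfar (ψ n) _ (hz (ψ n) i)
    have hWsum : ∑ i, W i = 1 := hWZ.1.2
    have hW0 : ∀ i, 0 ≤ W i := hWZ.1.1
    have hlim : ∑ i, W i • Z i = p := by
      have h1 : Tendsto (fun n => ∑ i, w (ψ n) i • z (ψ n) i) atTop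
          (𝓝 (∑ i, W i • Z i)) := by
        refine tendsto_finset_sum _ fun i _ => ?_
        exact (((continuous_apply i).tendsto W).comp hWt).smul (hZt i)
      have h2 : (fun n => ∑ i, w (ψ n) i • z (ψ n) i) = fun _ => p :=
        funext fun n => hsum (ψ n)
      rw [h2] at h1
      exact (tendsto_const_nhds_iff.mp h1).symm
    -- contradiction with extremality
    have hconv : Convex ℝ (⋂ n, P n) := convex_iInter fun n => hPconv n
    have hdiff : Convex ℝ ((⋂ n, P n) \ {p}) :=
      (hconv.mem_extremePoints_iff_convex_diff.mp hp).2
    have : p ∈ (⋂ n, P n) \ {p} := by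
      have hmem2 : ∑ i, W i • Z i ∈ (⋂ n, P n) \ {p} := by
        refine hdiff.sum_mem (fun i _ => hW0 i) hWsum fun i _ => ?_
        refine ⟨hZP i, ?_⟩
        simp only [Set.mem_singleton_iff]
        intro h
        have h2 := hZfar i
        rw [h] at h2
        simp at h2
        linarith
      rwa [hlim] at hmem2
    exact this.2 rfl
  -- construct the sequence
  have hsel : ∀ n, ∃ x ∈ (V n).filter (fun x => x ∈ Set.extremePoints ℝ (P n)),
      ∀ y ∈ (V n).filter (fun x => x ∈ Set.extremePoints ℝ (P n)),
        dist x p ≤ dist y p := by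
    intro n
    refine Finset.exists_min_image _ _ ?_
    obtain ⟨x, hx⟩ := hEne n
    exact ⟨x, Finset.mem_filter.mpr ⟨hE n hx, hx⟩⟩
  choose q hqmem hqmin using hsel
  refine ⟨q, fun n => (Finset.mem_filter.mp (hqmem n)).2, ?_⟩
  rw [Metric.tendsto_atTop]
  intro ε hε
  obtain ⟨N, hN⟩ := (claim ε hε).exists_forall_of_atTop
  refine ⟨N, fun n hn => ?_⟩
  obtain ⟨x, hx, hxd⟩ := hN n hn
  exact lt_of_le_of_lt (hqmin n x (Finset.mem_filter.mpr ⟨hE n hx, hx⟩)) hxd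
end

section
/- Let Ω⁽ᵏ⁾ be a finite set of size K and for each n ≥ k let Δ⁽ᵏ⁾_n be the convex hull of a finite set of probability vectors on Ω⁽ᵏ⁾ such that the sets are nested: Δ⁽ᵏ⁾_{n+1} ⊆ Δ⁽ᵏ⁾_n. Then every extreme point of the intersection P := ∩_{n>k} Δ⁽ᵏ⁾_n is a limit of a sequence (q_n) with q_n a vertex of Δ⁽ᵏ⁾_n. -/
open Filter Topology

private lemma pad_repr {K : ℕ} {s : Set (Fin K → ℝ)} {p : Fin K → ℝ}
    (hx : p ∈ convexHull ℝ s) :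
    ∃ (x : Fin (K + 1) → (Fin K → ℝ)) (w : Fin (K + 1) → ℝ),
      (∀ i, x i ∈ s) ∧ (∀ i, 0 ≤ w i) ∧ ∑ i, w i = 1 ∧ ∑ i, w i • x i = p := by
  classical
  obtain ⟨ι, hι, z, w, hz, hai, hw0, hw1, hwz⟩ := eq_pos_convex_span_of_mem_convexHull hx
  have hcard : Fintype.card ι ≤ K + 1 := by
    have h1 := hai.card_le_finrank_succ
    have h2 : Module.finrank ℝ (vectorSpan ℝ (Set.range z)) ≤ K := by
      simpa [Module.finrank_fin_fun] using Submodule.finrank_le (vectorSpan ℝ (Set.range z))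
    omega
  have hne : Nonempty ι := by
    by_contra h
    rw [not_nonempty_iff] at h
    rw [Finset.univ_eq_empty, Finset.sum_empty] at hw1
    exact one_ne_zero hw1.symm
  obtain ⟨i0⟩ := hne
  set c := Fintype.card ι with hc
  let e : Fin c ≃ ι := (Fintype.equivFin ι).symm
  refine ⟨fun i => if h : (i : ℕ) < c then z (e ⟨i, h⟩) else z i0,
          fun i => if h : (i : ℕ) < c then w (e ⟨i, h⟩) else 0, ?_, ?_, ?_, ?_⟩
  · intro i
    by_cases h : (i : ℕ) < c <;> simp only [h, dif_pos, dif_neg, not_false_iff] <;>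
      exact hz ⟨_, rfl⟩
  · intro i
    by_cases h : (i : ℕ) < c <;> simp only [h, dif_pos, dif_neg, not_false_iff]
    · exact (hw0 _).le
    · exact le_rfl
  · have key : ∀ (M : Type) (_ : AddCommMonoid M) (f : ι → M),
        ∑ i : Fin (K + 1), (if h : (i : ℕ) < c then f (e ⟨i, h⟩) else 0) = ∑ i, f i := by
      intro M _ f
      rw [Fin.sum_univ_eq_sum_range (fun j => if h : j < c then f (e ⟨j, h⟩) else 0) (K + 1)]
      rw [← Finset.sum_subset (Finset.range_subset_range.2 hcard)
        (fun j _ hj => dif_neg (Finset.mem_range.not.mp hj))]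
      rw [← Fin.sum_univ_eq_sum_range (fun j => if h : j < c then f (e ⟨j, h⟩) else 0) c]
      rw [Finset.sum_congr rfl (fun j _ => dif_pos j.isLt)]
      exact Fintype.sum_equiv e _ f (fun j => rfl)
    exact (key ℝ _ w).trans hw1
  · have he : ∀ i : Fin (K + 1),
        (if h : (i : ℕ) < c then w (e ⟨i, h⟩) else 0) •
          (if h : (i : ℕ) < c then z (e ⟨i, h⟩) else z i0)
        = (if h : (i : ℕ) < c then w (e ⟨i, h⟩) • z (e ⟨i, h⟩) else 0) := by
      intro i
      by_cases h : (i : ℕ) < c <;> simp [h]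
    rw [Finset.sum_congr rfl (fun i _ => he i)]
    have key : ∀ (f : ι → (Fin K → ℝ)),
        ∑ i : Fin (K + 1), (if h : (i : ℕ) < c then f (e ⟨i, h⟩) else 0) = ∑ i, f i := by
      intro f
      rw [Fin.sum_univ_eq_sum_range (fun j => if h : j < c then f (e ⟨j, h⟩) else 0) (K + 1)]
      rw [← Finset.sum_subset (Finset.range_subset_range.2 hcard)
        (fun j _ hj => dif_neg (Finset.mem_range.not.mp hj))]
      rw [← Fin.sum_univ_eq_sum_range (fun j => if h : j < c then f (e ⟨j, h⟩) else 0) c]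
      rw [Finset.sum_congr rfl (fun j _ => dif_pos j.isLt)]
      exact Fintype.sum_equiv e _ f (fun j => rfl)
    exact (key (fun i => w i • z i)).trans hwz
/-- Let `Δ n` be the convex hull of a finite set `V n` of probability
vectors on a finite set of size `K`, with `Δ (n+1) ⊆ Δ n`. Then every extreme point of
the intersection `⋂ (n > k), Δ n` is the limit of a sequence `q` with `q n` a vertex
(extreme point) of `Δ n` for all `n > k`. -/
theorem stmt4 (K k : ℕ) (V : ℕ → Finset (Fin K → ℝ))
    (hprob : ∀ n, ∀ v ∈ V n, (∀ i, 0 ≤ v i) ∧ ∑ i, v i = 1)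
    (Δ : ℕ → Set (Fin K → ℝ))
    (hΔ : ∀ n, Δ n = convexHull ℝ (V n : Set (Fin K → ℝ)))
    (hnest : ∀ n, Δ (n + 1) ⊆ Δ n)
    (p : Fin K → ℝ) (hp : p ∈ Set.extremePoints ℝ (⋂ n > k, Δ n)) :
    ∃ q : ℕ → Fin K → ℝ,
      (∀ n > k, q n ∈ Set.extremePoints ℝ (Δ n)) ∧ Tendsto q atTop (𝓝 p) := by
  classical
  set P : Set (Fin K → ℝ) := ⋂ n > k, Δ n with hP
  have hmono : ∀ {m n : ℕ}, m ≤ n → Δ n ⊆ Δ m := by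
    intro m n h
    induction h with
    | refl => exact subset_rfl
    | step h ih => exact (hnest _).trans ih
  have hconv : ∀ n, Convex ℝ (Δ n) := fun n => by
    rw [hΔ n]; exact convex_convexHull ℝ _
  have hcomp : ∀ n, IsCompact (Δ n) := fun n => by
    rw [hΔ n]; exact (V n).finite_toSet.isCompact_convexHull (𝕜 := ℝ)
  have hPconv : Convex ℝ P := convex_iInter fun n => convex_iInter fun _ => hconv n
  have hpP : p ∈ P := hp.1
  have hpΔ : ∀ n, k < n → p ∈ Δ n := by
    intro n hn
    exact Set.mem_iInter.1 (Set.mem_iInter.1 hpP n) hn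
  set S : ℕ → Set (Fin K → ℝ) := fun n => Set.extremePoints ℝ (Δ n) with hS
  have hSV : ∀ n, S n ⊆ V n := fun n => by
    rw [hS]; simp only; rw [hΔ n]; exact extremePoints_convexHull_subset
  have hSfin : ∀ n, (S n).Finite := fun n => (V n).finite_toSet.subset (hSV n)
  have hSne : ∀ n, k < n → (S n).Nonempty := fun n hn =>
    (hcomp n).extremePoints_nonempty ⟨p, hpΔ n hn⟩
  have hΔS : ∀ n, Δ n = convexHull ℝ (S n) := fun n =>
    ((closure_convexHull_extremePoints (hcomp n) (hconv n)).symm).trans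
      (((hSfin n).isClosed_convexHull (𝕜 := ℝ)).closure_eq)
  -- main claim
  have key : ∀ ε : ℝ, 0 < ε → ∃ N, ∀ n, N ≤ n → k < n → ∃ v ∈ S n, dist v p < ε := by
    by_contra hbad
    push_neg at hbad
    obtain ⟨ε, hε, hbad⟩ := hbad
    set F : Set (Fin K → ℝ) := {x | ε ≤ dist x p} with hF
    have hFclosed : IsClosed F :=
      isClosed_le continuous_const (continuous_id.dist continuous_const)
    have hrep : ∀ m, k < m → p ∈ convexHull ℝ (Δ m ∩ F) := by
      intro m hm
      obtain ⟨n, hnm, hnk, hfar⟩ := hbad m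
      have h1 : p ∈ convexHull ℝ (S n) := by rw [← hΔS n]; exact hpΔ n hnk
      refine convexHull_mono ?_ h1
      intro v hv
      exact ⟨hmono hnm (extremePoints_subset hv), hfar v hv⟩
    -- nested representation sets
    set R : ℕ → Set ((Fin (K + 1) → (Fin K → ℝ)) × (Fin (K + 1) → ℝ)) := fun m =>
      {xu | (∀ i, xu.1 i ∈ Δ (k + 1 + m) ∩ F) ∧ (∀ i, 0 ≤ xu.2 i) ∧
        ∑ i, xu.2 i = 1 ∧ ∑ i, xu.2 i • xu.1 i = p} with hR
    have hRnest : ∀ m, R (m + 1) ⊆ R m := by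
      intro m xu hxu
      refine ⟨fun i => ⟨?_, (hxu.1 i).2⟩, hxu.2.1, hxu.2.2.1, hxu.2.2.2⟩
      have : k + 1 + (m + 1) = (k + 1 + m) + 1 := rfl
      exact hnest _ (by rw [← this]; exact (hxu.1 i).1)
    have hRne : ∀ m, (R m).Nonempty := by
      intro m
      obtain ⟨x, w, hx, hw0, hw1, hwx⟩ := pad_repr (hrep (k + 1 + m) (by omega))
      exact ⟨(x, w), hx, hw0, hw1, hwx⟩
    have hRclosed : ∀ m, IsClosed (R m) := by
      intro m
      have h1 : IsClosed {xu : (Fin (K + 1) → (Fin K → ℝ)) × (Fin (K + 1) → ℝ) |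
          ∀ i, xu.1 i ∈ Δ (k + 1 + m) ∩ F} := by
        rw [Set.setOf_forall]
        exact isClosed_iInter fun i =>
          (((hcomp _).isClosed.inter hFclosed)).preimage
            ((continuous_apply i).comp continuous_fst)
      have h2 : IsClosed {xu : (Fin (K + 1) → (Fin K → ℝ)) × (Fin (K + 1) → ℝ) |
          ∀ i, 0 ≤ xu.2 i} := by
        rw [Set.setOf_forall]
        exact isClosed_iInter fun i =>
          isClosed_le continuous_const ((continuous_apply i).comp continuous_snd)
      have h3 : IsClosed {xu : (Fin (K + 1) → (Fin K → ℝ)) × (Fin (K + 1) → ℝ) |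
          ∑ i, xu.2 i = 1} :=
        isClosed_eq (continuous_finset_sum _ fun i _ =>
          (continuous_apply i).comp continuous_snd) continuous_const
      have h4 : IsClosed {xu : (Fin (K + 1) → (Fin K → ℝ)) × (Fin (K + 1) → ℝ) |
          ∑ i, xu.2 i • xu.1 i = p} :=
        isClosed_eq (continuous_finset_sum _ fun i _ =>
          ((continuous_apply i).comp continuous_snd).smul
            ((continuous_apply i).comp continuous_fst)) continuous_const
      exact h1.inter (h2.inter (h3.inter h4))
    have hR0comp : IsCompact (R 0) := by
      have hC : IsCompact ((Set.univ.pi fun _ : Fin (K + 1) => Δ (k + 1)) ×ˢ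
          (Set.univ.pi fun _ : Fin (K + 1) => Set.Icc (0 : ℝ) 1)) :=
        (isCompact_univ_pi fun _ => hcomp _).prod
          (isCompact_univ_pi fun _ => isCompact_Icc)
      refine hC.of_isClosed_subset (hRclosed 0) ?_
      rintro ⟨x, u⟩ ⟨hx, hu0, hu1, _⟩
      constructor
      · intro i _
        exact (hx i).1
      · intro i _
        refine ⟨hu0 i, ?_⟩
        rw [← hu1]
        exact Finset.single_le_sum (fun j _ => hu0 j) (Finset.mem_univ i)
    obtain ⟨⟨x, u⟩, hxu⟩ :=
      IsCompact.nonempty_iInter_of_sequence_nonempty_isCompact_isClosed R hRnest hRne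
        hR0comp hRclosed
    simp only [Set.mem_iInter] at hxu
    have hxP : ∀ i, x i ∈ P ∩ F := by
      intro i
      constructor
      · refine Set.mem_iInter.2 fun n => Set.mem_iInter.2 fun hn => ?_
        exact hmono (by omega : n ≤ k + 1 + n) ((hxu n).1 i).1
      · exact ((hxu 0).1 i).2
    have hxne : ∀ i, x i ≠ p := by
      intro i heq
      have h2 := (hxP i).2
      rw [hF, Set.mem_setOf_eq, heq, dist_self] at h2
      linarith
    have hmem : p ∈ convexHull ℝ (P \ {p}) := by
      obtain ⟨_, hu0, hu1, hux⟩ := hxu 0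
      have hmem' : (∑ i, u i • x i) ∈ convexHull ℝ (P \ {p}) :=
        (convex_convexHull ℝ _).sum_mem (fun i _ => hu0 i) hu1
          (fun i _ => subset_convexHull ℝ _ ⟨(hxP i).1, hxne i⟩)
      rwa [hux] at hmem'
    have := (hPconv.mem_extremePoints_iff_mem_diff_convexHull_diff.1 hp).2
    exact this hmem
  -- construct the sequence
  have hchoice : ∀ n, k < n → ∃ v ∈ S n, ∀ w ∈ S n, dist v p ≤ dist w p := fun n hn =>
    Set.exists_min_image (S n) (fun v => dist v p) (hSfin n) (hSne n hn)
  refine ⟨fun n => if h : k < n then (hchoice n h).choose else p, ?_, ?_⟩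
  · intro n hn
    simp only [dif_pos hn]
    exact (hchoice n hn).choose_spec.1
  · rw [Metric.tendsto_atTop]
    intro ε hε
    obtain ⟨N, hN⟩ := key ε hε
    refine ⟨max N (k + 1), fun n hn => ?_⟩
    have hn1 : N ≤ n := le_trans (le_max_left _ _) hn
    have hn2 : k < n := lt_of_lt_of_le (Nat.lt_succ_self k) (le_trans (le_max_right _ _) hn)
    obtain ⟨v, hv, hvd⟩ := hN n hn1 hn2
    simp only [dif_pos hn2]
    exact lt_of_le_of_lt ((hchoice n hn2).choose_spec.2 v hv) hvd
end

section
/- If k < l < n and Q⁽ⁿ⁾ is a probability distribution on size-n worlds, then P⁽ᵏ⁾∘(P⁽ˡ⁾∘Q⁽ⁿ⁾) = P⁽ᵏ⁾∘Q⁽ⁿ⁾; consequently Δ⁽ᵏ⁾_n ⊆ Δ⁽ᵏ⁾_l. -/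
open Finset

abbrev World (n : ℕ) := Fin n → Fin n → Bool

def induce {n k : ℕ} (ω : World n) (i : Fin k ↪ Fin n) : World k :=
  fun a b => ω (i a) (i b)

/-- `P⁽ᵏ⁾(ω'|ω)`: fraction of ordered `k`-tuples of distinct elements of `[n]` whose
induced relabeled subworld of `ω` equals `ω'`. -/
noncomputable def freq (k n : ℕ) (ω' : World k) (ω : World n) : ℝ :=
  (((univ : Finset (Fin k ↪ Fin n)).filter (fun i => induce ω i = ω')).card : ℝ) /
    ((univ : Finset (Fin k ↪ Fin n)).card : ℝ)

/-- Fenstad sampling `(P⁽ᵏ⁾∘Q)(ω') = Σ_ω Q(ω)·P⁽ᵏ⁾(ω'|ω)`. -/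
noncomputable def fenstad (k n : ℕ) (Q : World n → ℝ) : World k → ℝ :=
  fun ω' => ∑ ω : World n, Q ω * freq k n ω' ω

lemma emb_card_pos {k n : ℕ} (h : k ≤ n) : 0 < (univ : Finset (Fin k ↪ Fin n)).card := by
  rw [Finset.card_pos]
  exact ⟨Fin.castLEEmb h, mem_univ _⟩

lemma exists_perm {k n : ℕ} (e₁ e₂ : Fin k ↪ Fin n) :
    ∃ σ : Equiv.Perm (Fin n), ∀ x, σ (e₁ x) = e₂ x := by
  classical
  refine ⟨Equiv.extendSubtype
    (((Equiv.ofInjective e₁ e₁.injective).symm.trans (Equiv.ofInjective e₂ e₂.injective)) :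
      {x // x ∈ Set.range e₁} ≃ {x // x ∈ Set.range e₂}), fun x => ?_⟩
  rw [Equiv.extendSubtype_apply_of_mem _ _ ⟨x, rfl⟩]
  simp

open scoped Classical in
noncomputable def fiberCard (k l n : ℕ) (e : Fin k ↪ Fin n) : ℕ :=
  ((univ : Finset ((Fin l ↪ Fin n) × (Fin k ↪ Fin l))).filter
    (fun p => p.2.trans p.1 = e)).card

open scoped Classical in
lemma fiberCard_const {k l n : ℕ} (e₁ e₂ : Fin k ↪ Fin n) :
    fiberCard k l n e₁ = fiberCard k l n e₂ := by
  obtain ⟨σ, hσ⟩ := exists_perm e₁ e₂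
  unfold fiberCard
  apply Finset.card_bij (fun p _ => (p.1.trans σ.toEmbedding, p.2))
  · intro p hp
    simp only [mem_filter, mem_univ, true_and] at hp ⊢
    refine Function.Embedding.ext fun x => ?_
    have h1 : p.1 (p.2 x) = e₁ x := congrArg (fun f : Fin k ↪ Fin n => f x) hp
    simp only [Function.Embedding.trans_apply, Equiv.coe_toEmbedding, h1, hσ]
  · intro p hp q hq h
    simp only [Prod.mk.injEq] at h
    refine Prod.ext (Function.Embedding.ext fun x => ?_) h.2
    have := congrArg (fun f : Fin l ↪ Fin n => f x) h.1
    exact σ.injective (by simpa using this)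
  · intro q hq
    simp only [mem_filter, mem_univ, true_and] at hq
    refine ⟨(q.1.trans σ.symm.toEmbedding, q.2), ?_, ?_⟩
    · simp only [mem_filter, mem_univ, true_and]
      refine Function.Embedding.ext fun x => ?_
      have h1 : q.1 (q.2 x) = e₂ x := congrArg (fun f : Fin k ↪ Fin n => f x) hq
      simp only [Function.Embedding.trans_apply, Equiv.coe_toEmbedding, h1, ← hσ,
        Equiv.symm_apply_apply]
    · refine Prod.ext (Function.Embedding.ext fun x => ?_) rfl
      simp

open scoped Classical in
lemma total_pairs {k l n : ℕ} (e₀ : Fin k ↪ Fin n) :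
    (univ : Finset (Fin l ↪ Fin n)).card * (univ : Finset (Fin k ↪ Fin l)).card
      = fiberCard k l n e₀ * (univ : Finset (Fin k ↪ Fin n)).card := by
  have h := Finset.card_eq_sum_card_fiberwise
    (f := fun p : (Fin l ↪ Fin n) × (Fin k ↪ Fin l) => p.2.trans p.1)
    (s := univ) (t := univ) (fun p _ => mem_univ _)
  rw [← Finset.card_product, Finset.univ_product_univ, h]
  refine Eq.trans (Finset.sum_congr rfl fun e _ => (fiberCard_const e e₀ : _)) ?_
  rw [Finset.sum_const, smul_eq_mul, mul_comm]

open scoped Classical in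
lemma S_card_left {k l n : ℕ} (ω' : World k) (ω : World n) (e₀ : Fin k ↪ Fin n) :
    ((univ : Finset ((Fin l ↪ Fin n) × (Fin k ↪ Fin l))).filter
        (fun p => induce ω (p.2.trans p.1) = ω')).card
      = ((univ : Finset (Fin k ↪ Fin n)).filter (fun e => induce ω e = ω')).card
          * fiberCard k l n e₀ := by
  have h := Finset.card_eq_sum_card_fiberwise
    (f := fun p : (Fin l ↪ Fin n) × (Fin k ↪ Fin l) => p.2.trans p.1)
    (s := univ.filter (fun p => induce ω (p.2.trans p.1) = ω'))
    (t := univ.filter (fun e => induce ω e = ω'))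
    (fun p hp => by simp only [mem_coe, mem_filter, mem_univ, true_and] at hp ⊢; exact hp)
  rw [h]
  refine Eq.trans (Finset.sum_congr rfl fun e he => ?_)
    (by rw [Finset.sum_const, smul_eq_mul])
  simp only [mem_filter, mem_univ, true_and] at he
  show ((univ.filter (fun p : (Fin l ↪ Fin n) × (Fin k ↪ Fin l) =>
    induce ω (p.2.trans p.1) = ω')).filter (fun p => p.2.trans p.1 = e)).card = _
  rw [Finset.filter_filter]
  have : ∀ p : (Fin l ↪ Fin n) × (Fin k ↪ Fin l),
      (induce ω (p.2.trans p.1) = ω' ∧ p.2.trans p.1 = e) ↔ p.2.trans p.1 = e := by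
    intro p
    constructor
    · exact fun h => h.2
    · intro h; exact ⟨by rw [h, he], h⟩
  rw [Finset.filter_congr (fun p _ => this p)]
  exact fiberCard_const e e₀

open scoped Classical in
lemma S_card_right {k l n : ℕ} (ω' : World k) (ω : World n) :
    ((univ : Finset ((Fin l ↪ Fin n) × (Fin k ↪ Fin l))).filter
        (fun p => induce ω (p.2.trans p.1) = ω')).card
      = ∑ ω'' : World l,
          ((univ : Finset (Fin l ↪ Fin n)).filter (fun i => induce ω i = ω'')).card
          * ((univ : Finset (Fin k ↪ Fin l)).filter (fun j => induce ω'' j = ω')).card := by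
  have h := Finset.card_eq_sum_card_fiberwise
    (f := fun p : (Fin l ↪ Fin n) × (Fin k ↪ Fin l) => induce ω p.1)
    (s := univ.filter (fun p => induce ω (p.2.trans p.1) = ω'))
    (t := univ) (fun p _ => mem_univ _)
  rw [h]
  refine Finset.sum_congr rfl fun ω'' _ => ?_
  rw [Finset.filter_filter]
  rw [← Finset.card_product, ← Finset.filter_product, ← Finset.univ_product_univ]
  congr 1
  apply Finset.filter_congr
  intro p _
  constructor
  · rintro ⟨h1, h2⟩
    refine ⟨h2, ?_⟩
    rw [← h2, ← h1]
    rfl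
  · rintro ⟨h2, h1⟩
    refine ⟨?_, h2⟩
    rw [← h1, ← h2]
    rfl

lemma freq_nonneg (k n : ℕ) (ω' : World k) (ω : World n) : 0 ≤ freq k n ω' ω :=
  div_nonneg (Nat.cast_nonneg _) (Nat.cast_nonneg _)

open scoped Classical in
lemma sum_freq_one {k n : ℕ} (h : k ≤ n) (ω : World n) :
    ∑ ω' : World k, freq k n ω' ω = 1 := by
  unfold freq
  rw [← Finset.sum_div]
  rw [div_eq_one_iff_eq (by exact_mod_cast (emb_card_pos h).ne')]
  rw [← Nat.cast_sum]
  congr 1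
  exact (Finset.card_eq_sum_card_fiberwise
    (f := fun i : Fin k ↪ Fin n => induce ω i) (s := univ) (t := univ)
    (fun i _ => mem_univ _)).symm

open scoped Classical in
lemma freq_comp {k l n : ℕ} (hkl : k ≤ l) (hln : l ≤ n) (ω' : World k) (ω : World n) :
    ∑ ω'' : World l, freq l n ω'' ω * freq k l ω' ω'' = freq k n ω' ω := by
  set e₀ : Fin k ↪ Fin n := Fin.castLEEmb (hkl.trans hln) with he₀
  have tot := total_pairs (l := l) e₀
  have hC : (fiberCard k l n e₀ : ℝ) ≠ 0 := by
    have hpos : 0 < (univ : Finset (Fin l ↪ Fin n)).card * (univ : Finset (Fin k ↪ Fin l)).card :=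
      Nat.mul_pos (emb_card_pos hln) (emb_card_pos hkl)
    rw [tot] at hpos
    have h0 : fiberCard k l n e₀ ≠ 0 := by
      intro h0; rw [h0, zero_mul] at hpos; exact lt_irrefl 0 hpos
    exact_mod_cast h0
  have key : (((univ : Finset (Fin k ↪ Fin n)).filter (fun e => induce ω e = ω')).card
        * fiberCard k l n e₀ : ℕ)
      = ∑ ω'' : World l,
          ((univ : Finset (Fin l ↪ Fin n)).filter (fun i => induce ω i = ω'')).card
          * ((univ : Finset (Fin k ↪ Fin l)).filter (fun j => induce ω'' j = ω')).card := by
    rw [← S_card_left ω' ω e₀, S_card_right]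
  unfold freq
  rw [Finset.sum_congr rfl (fun ω'' _ => div_mul_div_comm _ _ _ _), ← Finset.sum_div]
  rw [show ∀ x y : ℝ, x / y = x / y from fun _ _ => rfl]
  have hcast : (∑ ω'' : World l,
      (((univ : Finset (Fin l ↪ Fin n)).filter (fun i => induce ω i = ω'')).card : ℝ)
      * (((univ : Finset (Fin k ↪ Fin l)).filter (fun j => induce ω'' j = ω')).card : ℝ))
      = ((((univ : Finset (Fin k ↪ Fin n)).filter (fun e => induce ω e = ω')).card : ℝ)
        * (fiberCard k l n e₀ : ℝ)) := by
    exact_mod_cast congrArg (Nat.cast : ℕ → ℝ) key.symm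
  rw [hcast]
  have htot : ((univ : Finset (Fin l ↪ Fin n)).card : ℝ)
      * ((univ : Finset (Fin k ↪ Fin l)).card : ℝ)
      = (fiberCard k l n e₀ : ℝ) * ((univ : Finset (Fin k ↪ Fin n)).card : ℝ) := by
    exact_mod_cast congrArg (Nat.cast : ℕ → ℝ) tot
  rw [htot, mul_comm (fiberCard k l n e₀ : ℝ)]
  rw [mul_div_mul_right _ _ hC]

lemma fenstad_comp {k l n : ℕ} (hkl : k ≤ l) (hln : l ≤ n) (Q : World n → ℝ)
    (ω' : World k) : fenstad k l (fenstad l n Q) ω' = fenstad k n Q ω' := by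
  unfold fenstad
  rw [Finset.sum_congr rfl (fun ω'' _ => Finset.sum_mul _ _ _), Finset.sum_comm]
  refine Finset.sum_congr rfl fun ω _ => ?_
  rw [← freq_comp hkl hln ω' ω, Finset.mul_sum]
  exact Finset.sum_congr rfl fun ω'' _ => by ring


/-- for `k < l < n` and any probability distribution `Q⁽ⁿ⁾` on size-`n`
worlds, `P⁽ᵏ⁾∘(P⁽ˡ⁾∘Q⁽ⁿ⁾) = P⁽ᵏ⁾∘Q⁽ⁿ⁾`; consequently `Δ⁽ᵏ⁾_n ⊆ Δ⁽ᵏ⁾_l`. -/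
theorem stmt5 (k l n : ℕ) (hkl : k < l) (hln : l < n)
    (Q : World n → ℝ) (hQ0 : ∀ ω, 0 ≤ Q ω) (hQ1 : ∑ ω : World n, Q ω = 1) :
    (∀ ω' : World k, fenstad k l (fenstad l n Q) ω' = fenstad k n Q ω') ∧
    ({q : World k → ℝ | ∃ Q' : World n → ℝ,
        (∀ ω, 0 ≤ Q' ω) ∧ (∑ ω : World n, Q' ω = 1) ∧ q = fenstad k n Q'} ⊆
      {q : World k → ℝ | ∃ Q' : World l → ℝ,
        (∀ ω, 0 ≤ Q' ω) ∧ (∑ ω : World l, Q' ω = 1) ∧ q = fenstad k l Q'}) := by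
  constructor
  · exact fun ω' => fenstad_comp hkl.le hln.le Q ω'
  · rintro q ⟨Q', h0, h1, rfl⟩
    refine ⟨fenstad l n Q', fun ω'' => Finset.sum_nonneg fun ω _ =>
      mul_nonneg (h0 ω) (freq_nonneg _ _ _ _), ?_, ?_⟩
    · unfold fenstad
      rw [Finset.sum_comm]
      rw [Finset.sum_congr rfl fun ω _ => (Finset.mul_sum _ _ _).symm]
      rw [Finset.sum_congr rfl fun ω _ => by rw [sum_freq_one hln.le ω, mul_one]]
      exact h1
    · exact funext fun ω' => (fenstad_comp hkl.le hln.le Q' ω').symm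
end

section
/- The distribution '+' on undirected 3-node graphs assigning probability 1/3 to each single-edge graph (and 0 to all other graphs) is not n-extendable for any n ≥ 5: there is no probability distribution Q⁽ⁿ⁾ on size-n undirected graphs whose expected statistical frequency distribution of induced 3-node subgraphs equals '+'. -/
open Finset

/-- The undirected single-edge 3-world with edge `{a,b}`. -/
def g (a b : Fin 3) : World 3 :=
  fun i j => decide ((i = a ∧ j = b) ∨ (i = b ∧ j = a))

/-- exactly one of three bools is true -/
def E1 (p q r : Bool) : Prop :=
  (p = true ∧ q = false ∧ r = false) ∨ (p = false ∧ q = true ∧ r = false) ∨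
    (p = false ∧ q = false ∧ r = true)

lemma e1_first : ∀ p q, E1 true p q → p = false ∧ q = false := by
  intro p q h; rcases h with ⟨_, h1, h2⟩ | ⟨h, _⟩ | ⟨h, _⟩ <;> simp_all
lemma e1_ff : ∀ r, E1 false false r → r = true := by
  intro r h; rcases h with ⟨h, _⟩ | ⟨_, h, _⟩ | ⟨_, _, h⟩ <;> simp_all
lemma e1_tt : ∀ r, ¬ E1 true true r := by
  intro r h; rcases h with ⟨_, h, _⟩ | ⟨h, _⟩ | ⟨h, _⟩ <;> simp_all

/-- On ≥5 vertices, "every triple spans exactly one edge" is impossible once an edge exists. -/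
lemma five {n : ℕ} (f : Fin n → Fin n → Bool)
    (h : ∀ a b c : Fin n, a ≠ b → a ≠ c → b ≠ c → E1 (f a b) (f a c) (f b c))
    (a b x y z : Fin n)
    (hab : a ≠ b) (hax : a ≠ x) (hay : a ≠ y) (haz : a ≠ z)
    (hbx : b ≠ x) (hby : b ≠ y) (hbz : b ≠ z)
    (hxy : x ≠ y) (hxz : x ≠ z) (hyz : y ≠ z)
    (he : f a b = true) : False := by
  have h1 := h a b x hab hax hbx
  rw [he] at h1
  have hax' := (e1_first _ _ h1).1
  have h2 := h a b y hab hay hby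
  rw [he] at h2
  have hay' := (e1_first _ _ h2).1
  have h3 := h a b z hab haz hbz
  rw [he] at h3
  have haz' := (e1_first _ _ h3).1
  have h4 := h a x y hax hay hxy
  rw [hax', hay'] at h4
  have hxy' := e1_ff _ h4
  have h5 := h a x z hax haz hxz
  rw [hax', haz'] at h5
  have hxz' := e1_ff _ h5
  have h6 := h x y z hxy hxz hyz
  rw [hxy', hxz'] at h6
  exact e1_tt _ h6

lemma emb3_inj {n : ℕ} (a b c : Fin n) (hab : a ≠ b) (hac : a ≠ c) (hbc : b ≠ c) :
    Function.Injective (![a, b, c]) := by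
  intro u v huv
  fin_cases u <;> fin_cases v <;> simp_all

/-- the distribution `'+'` assigning probability `1/3` to each of the
three single-edge undirected 3-worlds is not `n`-extendable for any `n ≥ 5`: no
probability distribution `Q⁽ⁿ⁾` on undirected size-`n` worlds has `'+'` as its expected
statistical frequency distribution of induced 3-worlds. -/
theorem stmt11 (n : ℕ) (hn : 5 ≤ n) :
    ¬ ∃ Q : World n → ℝ,
        (∀ ω, 0 ≤ Q ω) ∧ (∑ ω : World n, Q ω = 1) ∧
        (∀ ω : World n, Q ω ≠ 0 → (∀ i j, ω i j = ω j i) ∧ (∀ i, ω i i = false)) ∧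
        (∀ ω' : World 3, fenstad 3 n Q ω' =
          if ω' = g 0 1 ∨ ω' = g 0 2 ∨ ω' = g 1 2 then (1 : ℝ) / 3 else 0) := by
  rintro ⟨Q, hQpos, hQsum, _hsym, hfen⟩
  -- pick ω in the support
  obtain ⟨ω, -, hQω⟩ : ∃ ω ∈ (univ : Finset (World n)), Q ω ≠ 0 :=
    Finset.exists_ne_zero_of_sum_ne_zero (by rw [hQsum]; norm_num)
  -- the set of embeddings is nonempty
  have hemb : (0 : ℝ) < ((univ : Finset (Fin 3 ↪ Fin n)).card : ℝ) := by
    have : Nonempty (Fin 3 ↪ Fin n) := ⟨Fin.castLEEmb (by omega)⟩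
    exact_mod_cast Finset.card_pos.mpr Finset.univ_nonempty
  -- every embedding induces one of the three single-edge graphs
  have hind : ∀ i : Fin 3 ↪ Fin n,
      induce ω i = g 0 1 ∨ induce ω i = g 0 2 ∨ induce ω i = g 1 2 := by
    intro i
    by_contra hcon
    have hz : fenstad 3 n Q (induce ω i) = 0 := by
      rw [hfen]; rw [if_neg hcon]
    have hterm : Q ω * freq 3 n (induce ω i) ω = 0 := by
      have := (Finset.sum_eq_zero_iff_of_nonneg (fun ω' _ =>
        mul_nonneg (hQpos ω') (div_nonneg (Nat.cast_nonneg _) (Nat.cast_nonneg _)))).1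
        hz ω (mem_univ ω)
      exact this
    have hfreq : freq 3 n (induce ω i) ω = 0 := by
      rcases mul_eq_zero.1 hterm with h | h
      · exact absurd h hQω
      · exact h
    unfold freq at hfreq
    rw [div_eq_zero_iff] at hfreq
    rcases hfreq with h | h
    · have hcard : ((univ : Finset (Fin 3 ↪ Fin n)).filter
          (fun j => induce ω j = induce ω i)).card = 0 := by exact_mod_cast h
      have : i ∈ (univ : Finset (Fin 3 ↪ Fin n)).filter
          (fun j => induce ω j = induce ω i) := by
        simp
      rw [Finset.card_eq_zero] at hcard
      rw [hcard] at this
      exact absurd this (Finset.notMem_empty i)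
    · exact absurd h (ne_of_gt hemb)
  -- hence every triple of distinct vertices spans exactly one edge
  have hE : ∀ a b c : Fin n, a ≠ b → a ≠ c → b ≠ c → E1 (ω a b) (ω a c) (ω b c) := by
    intro a b c hab hac hbc
    set i : Fin 3 ↪ Fin n := ⟨![a, b, c], emb3_inj a b c hab hac hbc⟩ with hi
    have e0 : i 0 = a := rfl
    have e1 : i 1 = b := rfl
    have e2 : i 2 = c := rfl
    rcases hind i with h | h | h
    · left
      refine ⟨?_, ?_, ?_⟩
      · have := congrFun (congrFun h 0) 1
        rw [show (induce ω i) 0 1 = ω a b from rfl] at this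
        rw [this]; decide
      · have := congrFun (congrFun h 0) 2
        rw [show (induce ω i) 0 2 = ω a c from rfl] at this
        rw [this]; decide
      · have := congrFun (congrFun h 1) 2
        rw [show (induce ω i) 1 2 = ω b c from rfl] at this
        rw [this]; decide
    · right; left
      refine ⟨?_, ?_, ?_⟩
      · have := congrFun (congrFun h 0) 1
        rw [show (induce ω i) 0 1 = ω a b from rfl] at this
        rw [this]; decide
      · have := congrFun (congrFun h 0) 2
        rw [show (induce ω i) 0 2 = ω a c from rfl] at this
        rw [this]; decide
      · have := congrFun (congrFun h 1) 2
        rw [show (induce ω i) 1 2 = ω b c from rfl] at this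
        rw [this]; decide
    · right; right
      refine ⟨?_, ?_, ?_⟩
      · have := congrFun (congrFun h 0) 1
        rw [show (induce ω i) 0 1 = ω a b from rfl] at this
        rw [this]; decide
      · have := congrFun (congrFun h 0) 2
        rw [show (induce ω i) 0 2 = ω a c from rfl] at this
        rw [this]; decide
      · have := congrFun (congrFun h 1) 2
        rw [show (induce ω i) 1 2 = ω b c from rfl] at this
        rw [this]; decide
  -- five distinct vertices
  let v0 : Fin n := ⟨0, by omega⟩
  let v1 : Fin n := ⟨1, by omega⟩
  let v2 : Fin n := ⟨2, by omega⟩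
  let v3 : Fin n := ⟨3, by omega⟩
  let v4 : Fin n := ⟨4, by omega⟩
  have d01 : v0 ≠ v1 := by simp [v0, v1, Fin.ext_iff]
  have d02 : v0 ≠ v2 := by simp [v0, v2, Fin.ext_iff]
  have d03 : v0 ≠ v3 := by simp [v0, v3, Fin.ext_iff]
  have d04 : v0 ≠ v4 := by simp [v0, v4, Fin.ext_iff]
  have d12 : v1 ≠ v2 := by simp [v1, v2, Fin.ext_iff]
  have d13 : v1 ≠ v3 := by simp [v1, v3, Fin.ext_iff]
  have d14 : v1 ≠ v4 := by simp [v1, v4, Fin.ext_iff]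
  have d23 : v2 ≠ v3 := by simp [v2, v3, Fin.ext_iff]
  have d24 : v2 ≠ v4 := by simp [v2, v4, Fin.ext_iff]
  have d34 : v3 ≠ v4 := by simp [v3, v4, Fin.ext_iff]
  rcases hE v0 v1 v2 d01 d02 d12 with ⟨h1, -, -⟩ | ⟨-, h1, -⟩ | ⟨-, -, h1⟩
  · exact five ω hE v0 v1 v2 v3 v4 d01 d02 d03 d04 d12 d13 d14 d23 d24 d34 h1
  · exact five ω hE v0 v2 v1 v3 v4 d02 d01 d03 d04 d12.symm d23 d24 d13 d14 d34 h1
  · exact five ω hE v1 v2 v0 v3 v4 d12 d01.symm d13 d14 d02.symm d23 d24 d03 d04 d34 h1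
end
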